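/- Let M ≥ 1, let b ∈ ℂ^M have |b_k| = 1 for all k, and let A = {s(x) : x ∈ X} be the set of equivalent transmitted symbols. Let s_max ∈ A attain the maximum modulus over A. Then the four points s_max, i·s_max, −s_max, −i·s_max all belong to A, the minimum pairwise distance of this four-point set equals √2·|s_max|, and every set of four distinct points of A has minimum pairwise distance at most √2·|s_max|; that is, {±s_max, ±i·s_max} maximizes the minimum pairwise distance over all four-element subsets of A. -/

import Mathlib

/-- The one-bit alphabet `X = {x : x_k ∈ {(±1 ± i)/√2} for all k}`. -/
noncomputable def oneBit (M : ℕ) : Set (Fin M → ℂ) :=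
  {x | ∀ k, x k ∈ ({(1 + Complex.I) / Real.sqrt 2, (1 - Complex.I) / Real.sqrt 2,
    (-1 + Complex.I) / Real.sqrt 2, (-1 - Complex.I) / Real.sqrt 2} : Set ℂ)}

/-- The equivalent transmitted symbol `s(x) = (1/√M)·Σ_k conj(b_k)·x_k`. -/
noncomputable def symb {M : ℕ} (b : Fin M → ℂ) (x : Fin M → ℂ) : ℂ :=
  ((1 / Real.sqrt M : ℝ) : ℂ) * ∑ k, (starRingEnd ℂ) (b k) * x k

/-- The set `A = {s(x) : x ∈ X}` of equivalent transmitted symbols. -/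
noncomputable def symbSet (M : ℕ) (b : Fin M → ℂ) : Set ℂ :=
  {s | ∃ x ∈ oneBit M, s = symb b x}

lemma oneBit_mulI {M : ℕ} {x : Fin M → ℂ} (hx : x ∈ oneBit M) :
    (fun k => Complex.I * x k) ∈ oneBit M := by
  intro k
  have h := hx k
  simp only [Set.mem_insert_iff, Set.mem_singleton_iff] at h ⊢
  rcases h with h | h | h | h <;> rw [h]
  · right; right; left; rw [mul_div_assoc']; ring_nf; rw [Complex.I_sq]; ring
  · left; rw [mul_div_assoc']; ring_nf; rw [Complex.I_sq]; ring
  · right; right; right; rw [mul_div_assoc']; ring_nf; rw [Complex.I_sq]; ring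
  · right; left; rw [mul_div_assoc']; ring_nf; rw [Complex.I_sq]; ring

lemma symb_mul {M : ℕ} (b : Fin M → ℂ) (x : Fin M → ℂ) (c : ℂ) :
    symb b (fun k => c * x k) = c * symb b x := by
  unfold symb
  rw [show (∑ k, (starRingEnd ℂ) (b k) * (c * x k)) = c * ∑ k, (starRingEnd ℂ) (b k) * x k by
    rw [Finset.mul_sum]; exact Finset.sum_congr rfl fun k _ => by ring]
  ring

lemma exists_nonneg_inner (z : Fin 4 → ℂ) :
    ∃ j k : Fin 4, j ≠ k ∧ 0 ≤ (z j * (starRingEnd ℂ) (z k)).re := by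
  by_cases h0 : z 0 = 0
  · exact ⟨0, 1, by decide, by simp [h0]⟩
  set w : Fin 3 → ℂ := fun i => z i.succ / z 0 with hw
  have hz : ∀ i : Fin 3, z i.succ = w i * z 0 := fun i => by
    rw [hw]; exact (div_mul_cancel₀ _ h0).symm
  by_cases hre : ∃ i : Fin 3, 0 ≤ (w i).re
  · obtain ⟨i, hi⟩ := hre
    refine ⟨0, i.succ, (Fin.succ_ne_zero i).symm, ?_⟩
    have h1 : z 0 * (starRingEnd ℂ) (z i.succ)
        = (Complex.normSq (z 0) : ℝ) * (starRingEnd ℂ) (w i) := by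
      rw [hz i, map_mul, ← Complex.mul_conj]; ring
    rw [h1, Complex.re_ofReal_mul]
    exact mul_nonneg (Complex.normSq_nonneg _) (by simpa using hi)
  · push_neg at hre
    have key : ∃ i j : Fin 3, i ≠ j ∧ 0 ≤ (w i).im * (w j).im := by
      rcases le_or_gt 0 (w 0).im with h|h
      · rcases le_or_gt 0 (w 1).im with h'|h'
        · exact ⟨0, 1, by decide, mul_nonneg h h'⟩
        · rcases le_or_gt 0 (w 2).im with h''|h''
          · exact ⟨0, 2, by decide, mul_nonneg h h''⟩
          · exact ⟨1, 2, by decide, by nlinarith⟩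
      · rcases le_or_gt 0 (w 1).im with h'|h'
        · rcases le_or_gt 0 (w 2).im with h''|h''
          · exact ⟨1, 2, by decide, mul_nonneg h' h''⟩
          · exact ⟨0, 2, by decide, by nlinarith⟩
        · exact ⟨0, 1, by decide, by nlinarith⟩
    obtain ⟨i, j, hij, him⟩ := key
    refine ⟨i.succ, j.succ, fun h => hij (Fin.succ_injective _ h), ?_⟩
    have h1 : z i.succ * (starRingEnd ℂ) (z j.succ)
        = (Complex.normSq (z 0) : ℝ) * (w i * (starRingEnd ℂ) (w j)) := by
      rw [hz i, hz j, map_mul, ← Complex.mul_conj]; ring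
    have h2 : (w i * (starRingEnd ℂ) (w j)).re
        = (w i).re * (w j).re + (w i).im * (w j).im := by
      rw [Complex.mul_re, Complex.conj_re, Complex.conj_im]; ring
    rw [h1, Complex.re_ofReal_mul, h2]
    exact mul_nonneg (Complex.normSq_nonneg _)
      (add_nonneg (mul_pos_of_neg_of_neg (hre i) (hre j)).le him)

lemma dist_le_of_nonneg_inner {z w : ℂ} {R : ℝ} (hz : ‖z‖ ≤ R)
    (hw : ‖w‖ ≤ R) (h : 0 ≤ (z * (starRingEnd ℂ) w).re) :
    ‖z - w‖ ≤ Real.sqrt 2 * R := by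
  have hR : 0 ≤ R := le_trans (norm_nonneg z) hz
  have hz2 : Complex.normSq z ≤ R ^ 2 := by
    rw [← Complex.sq_norm]; exact pow_le_pow_left₀ (norm_nonneg z) hz 2
  have hw2 : Complex.normSq w ≤ R ^ 2 := by
    rw [← Complex.sq_norm]; exact pow_le_pow_left₀ (norm_nonneg w) hw 2
  have h2 : Complex.normSq (z - w) ≤ 2 * R ^ 2 := by
    rw [Complex.normSq_sub]; nlinarith
  calc ‖z - w‖ = Real.sqrt (Complex.normSq (z - w)) := by rw [Complex.norm_def]
    _ ≤ Real.sqrt (2 * R ^ 2) := Real.sqrt_le_sqrt h2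
    _ = Real.sqrt 2 * R := by
        rw [Real.sqrt_mul (by norm_num), Real.sqrt_sq hR]


/-- If `s_max ∈ A` attains the maximum modulus over `A`, then the four points
`±s_max, ±i·s_max` all lie in `A`, the minimum pairwise distance of this four-point set
equals `√2·|s_max|`, and any four distinct points of `A` have minimum pairwise distance
at most `√2·|s_max|`: the QPSK-like codebook `{±s_max, ±i·s_max}` maximizes the minimum
pairwise distance over all four-element subsets of `A`. -/
theorem four_point_codebook_optimal (M : ℕ) (hM : 1 ≤ M) (b : Fin M → ℂ)
    (hb : ∀ k, ‖b k‖ = 1) (smax : ℂ) (hmem : smax ∈ symbSet M b)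
    (hmax : ∀ s ∈ symbSet M b, ‖s‖ ≤ ‖smax‖) :
    ({smax, Complex.I * smax, -smax, -(Complex.I * smax)} : Set ℂ) ⊆ symbSet M b ∧
      IsLeast {d : ℝ | ∃ z ∈ ({smax, Complex.I * smax, -smax, -(Complex.I * smax)} : Set ℂ),
          ∃ w ∈ ({smax, Complex.I * smax, -smax, -(Complex.I * smax)} : Set ℂ),
          z ≠ w ∧ d = ‖z - w‖}
        (Real.sqrt 2 * ‖smax‖) ∧
      ∀ f : Fin 4 → ℂ, (∀ j, f j ∈ symbSet M b) → Function.Injective f →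
        ∃ j k, j ≠ k ∧ ‖f j - f k‖ ≤ Real.sqrt 2 * ‖smax‖ := by
  -- closure of A under multiplication by I
  have hcl : ∀ s ∈ symbSet M b, Complex.I * s ∈ symbSet M b := by
    rintro s ⟨x, hx, rfl⟩
    exact ⟨fun k => Complex.I * x k, oneBit_mulI hx, (symb_mul b x Complex.I).symm⟩
  have h1 : Complex.I * smax ∈ symbSet M b := hcl _ hmem
  have h2 : -smax ∈ symbSet M b := by
    have := hcl _ h1
    rwa [show Complex.I * (Complex.I * smax) = -smax by
      rw [← mul_assoc, Complex.I_mul_I]; ring] at this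
  have h3 : -(Complex.I * smax) ∈ symbSet M b := by
    have := hcl _ h2
    rwa [show Complex.I * -smax = -(Complex.I * smax) by ring] at this
  -- smax ≠ 0
  have hs0 : smax ≠ 0 := by
    intro hzero
    set i0 : Fin M := ⟨0, hM⟩ with hi0
    set x1 : Fin M → ℂ := fun _ => (1 + Complex.I) / Real.sqrt 2 with hx1
    set x2 : Fin M → ℂ := Function.update x1 i0 ((-1 - Complex.I) / Real.sqrt 2) with hx2
    have hx1m : x1 ∈ oneBit M := fun k => Or.inl rfl
    have hx2m : x2 ∈ oneBit M := by
      intro k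
      by_cases hk : k = i0
      · subst hk; rw [hx2, Function.update_self]
        right; right; right; rfl
      · rw [hx2, Function.update_of_ne hk]; exact Or.inl rfl
    have hs1 : symb b x1 = 0 := by
      have h' := hmax _ ⟨x1, hx1m, rfl⟩
      rw [hzero, norm_zero] at h'
      exact norm_eq_zero.mp (le_antisymm h' (norm_nonneg _))
    have hs2 : symb b x2 = 0 := by
      have h' := hmax _ ⟨x2, hx2m, rfl⟩
      rw [hzero, norm_zero] at h'
      exact norm_eq_zero.mp (le_antisymm h' (norm_nonneg _))
    have hdiff : symb b x1 - symb b x2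
        = ((1 / Real.sqrt M : ℝ) : ℂ) * ((starRingEnd ℂ) (b i0) *
          ((1 + Complex.I) / Real.sqrt 2 - (-1 - Complex.I) / Real.sqrt 2)) := by
      unfold symb
      rw [← mul_sub, ← Finset.sum_sub_distrib]
      congr 1
      rw [Finset.sum_eq_single i0]
      · simp only [hx2, hx1, Function.update_self]
        ring
      · intro k _ hk
        rw [hx2, Function.update_of_ne hk, sub_self]
      · intro h; exact absurd (Finset.mem_univ i0) h
    rw [hs1, hs2, sub_self] at hdiff
    have hM0 : (0:ℝ) < Real.sqrt M := Real.sqrt_pos.mpr (by exact_mod_cast hM)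
    have hc1 : ((1 / Real.sqrt M : ℝ) : ℂ) ≠ 0 := by
      simp [ne_of_gt hM0]
    have hc2 : (starRingEnd ℂ) (b i0) ≠ 0 := by
      intro h
      have := hb i0
      rw [← Complex.norm_conj, h] at this
      simp at this
    have hc3 : ((1 + Complex.I) / Real.sqrt 2 - (-1 - Complex.I) / Real.sqrt 2) ≠ 0 := by
      rw [div_sub_div_same]
      apply div_ne_zero
      · intro h
        have := congrArg Complex.re h
        simp at this
      · simpa using Real.sqrt_ne_zero'.mpr (by norm_num : (0:ℝ) < 2)
    exact (mul_ne_zero hc1 (mul_ne_zero hc2 hc3)) hdiff.symm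
  -- helper for lower bound
  have habs : ∀ u v z w : ℂ, Real.sqrt 2 ≤ ‖u - v‖ → z = u * smax →
      w = v * smax → Real.sqrt 2 * ‖smax‖ ≤ ‖z - w‖ := by
    intro u v z w h hz hw
    rw [hz, hw, show u * smax - v * smax = (u - v) * smax by ring, norm_mul]
    exact mul_le_mul_of_nonneg_right h (norm_nonneg smax)
  have sqle : ∀ u v : ℂ, 2 ≤ Complex.normSq (u - v) → Real.sqrt 2 ≤ ‖u - v‖ := by
    intro u v h
    rw [Complex.norm_def]
    exact Real.sqrt_le_sqrt h
  refine ⟨?_, ⟨?_, ?_⟩, ?_⟩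
  · intro z hz
    rcases hz with rfl | rfl | rfl | hz
    · exact hmem
    · exact h1
    · exact h2
    · rw [Set.mem_singleton_iff] at hz; subst hz; exact h3
  · -- membership of √2·|smax| in the distance set
    refine ⟨smax, Or.inl rfl, Complex.I * smax, Or.inr (Or.inl rfl), ?_, ?_⟩
    · intro h
      have hz : (1 - Complex.I) * smax = 0 := by linear_combination h
      rcases mul_eq_zero.mp hz with h' | h'
      · have := congrArg Complex.re h'
        simp at this
      · exact hs0 h'
    · rw [show smax - Complex.I * smax = (1 - Complex.I) * smax by ring, norm_mul,
        show ‖1 - Complex.I‖ = Real.sqrt 2 by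
          rw [Complex.norm_def, Complex.normSq_apply]; norm_num]
  · -- lower bound
    rintro d ⟨z, hz, w, hw, hzw, rfl⟩
    simp only [Set.mem_insert_iff, Set.mem_singleton_iff] at hz hw
    rcases hz with rfl | rfl | rfl | rfl <;> rcases hw with rfl | rfl | rfl | rfl
    · exact absurd rfl hzw
    · exact habs 1 Complex.I _ _ (sqle _ _ (by rw [Complex.normSq_apply]; norm_num))
        (by ring) (by ring)
    · exact habs 1 (-1) _ _ (sqle _ _ (by rw [Complex.normSq_apply]; norm_num))
        (by ring) (by ring)
    · exact habs 1 (-Complex.I) _ _ (sqle _ _ (by rw [Complex.normSq_apply]; norm_num))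
        (by ring) (by ring)
    · exact habs Complex.I 1 _ _ (sqle _ _ (by rw [Complex.normSq_apply]; norm_num))
        (by ring) (by ring)
    · exact absurd rfl hzw
    · exact habs Complex.I (-1) _ _ (sqle _ _ (by rw [Complex.normSq_apply]; norm_num))
        (by ring) (by ring)
    · exact habs Complex.I (-Complex.I) _ _ (sqle _ _ (by rw [Complex.normSq_apply]; norm_num))
        (by ring) (by ring)
    · exact habs (-1) 1 _ _ (sqle _ _ (by rw [Complex.normSq_apply]; norm_num))
        (by ring) (by ring)
    · exact habs (-1) Complex.I _ _ (sqle _ _ (by rw [Complex.normSq_apply]; norm_num))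
        (by ring) (by ring)
    · exact absurd rfl hzw
    · exact habs (-1) (-Complex.I) _ _ (sqle _ _ (by rw [Complex.normSq_apply]; norm_num))
        (by ring) (by ring)
    · exact habs (-Complex.I) 1 _ _ (sqle _ _ (by rw [Complex.normSq_apply]; norm_num))
        (by ring) (by ring)
    · exact habs (-Complex.I) Complex.I _ _ (sqle _ _ (by rw [Complex.normSq_apply]; norm_num))
        (by ring) (by ring)
    · exact habs (-Complex.I) (-1) _ _ (sqle _ _ (by rw [Complex.normSq_apply]; norm_num))
        (by ring) (by ring)
    · exact absurd rfl hzw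
  · intro f hf hinj
    obtain ⟨j, k, hjk, hre⟩ := exists_nonneg_inner f
    exact ⟨j, k, hjk, dist_le_of_nonneg_inner (hmax _ (hf j)) (hmax _ (hf k)) hre⟩
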